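/- arXiv:2409.11614 — 3 statements merged into one kernel-verified Lean document; each statement's English description precedes it below -/
import Mathlib

section
/- Let E be a finite set of line segments in the plane ℝ² whose total Euclidean length is L, and let m be a natural number. For a shift (x,y) ∈ [0,1]² and a level i ∈ {0,1,…,m}, say that a segment e is cut at level i under shift (x,y) if e intersects the grid G_i(x,y) = { p ∈ ℝ² : p₁ ∈ x + 2^{−i}·ℤ or p₂ ∈ y + 2^{−i}·ℤ }. Then the expectation, over (x,y) chosen uniformly at random from [0,1]², of the quantity Σ_{i=0}^{m} Σ_{e ∈ E} 2^{−i}·[e is cut at level i under (x,y)] is at most √2·(m+1)·L. -/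
open scoped Classical

noncomputable section

/-- Points in the Euclidean plane. -/
abbrev Pt : Type := EuclideanSpace ℝ (Fin 2)

/-- `S` is in general position: no three (distinct) points of `S` are collinear. -/
def GenPos (S : Finset Pt) : Prop :=
  ∀ p ∈ S, ∀ q ∈ S, ∀ r ∈ S, p ≠ q → p ≠ r → q ≠ r →
    ¬ Collinear ℝ ({p, q, r} : Set Pt)

/-- The closed segments `[a,b]` and `[c,d]` cross: they share a point that is
interior to both segments. -/
def SegCross (a b c d : Pt) : Prop :=
  ∃ p : Pt, p ∈ openSegment ℝ a b ∧ p ∈ openSegment ℝ c d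

/-- Two unordered edges (over vertices lying in the plane) cross. -/
def EdgeCross {S : Finset Pt} (e₁ e₂ : Sym2 ↥S) : Prop :=
  ∃ a b c d : ↥S, e₁ = s(a, b) ∧ e₂ = s(c, d) ∧ SegCross ↑a ↑b ↑c ↑d

/-- A (straight-line drawn) graph is plane if no two of its edges cross. -/
def PlaneGraph {S : Finset Pt} (G : SimpleGraph ↥S) : Prop :=
  ∀ e₁ ∈ G.edgeSet, ∀ e₂ ∈ G.edgeSet, e₁ ≠ e₂ → ¬ EdgeCross e₁ e₂

/-- Every edge has one red (`true`) and one blue (`false`) endpoint. -/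
def Bichromatic {S : Finset Pt} (col : Pt → Bool) (G : SimpleGraph ↥S) : Prop :=
  ∀ u v : ↥S, G.Adj u v → col ↑u ≠ col ↑v

/-- The Euclidean length of an unordered edge. -/
def edgeLen {S : Finset Pt} : Sym2 ↥S → ℝ :=
  Sym2.lift ⟨fun a b => dist (a : Pt) (b : Pt), fun _ _ => dist_comm _ _⟩

/-- The total Euclidean length of the edges of a graph drawn with straight-line edges. -/
def graphLen {S : Finset Pt} (G : SimpleGraph ↥S) : ℝ :=
  ∑ᶠ e ∈ G.edgeSet, edgeLen e

/-- A bichromatic spanning tree of `S`. -/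
def IsBST {S : Finset Pt} (col : Pt → Bool) (G : SimpleGraph ↥S) : Prop :=
  G.IsTree ∧ Bichromatic col G

/-- A minimum bichromatic spanning tree of `S`. -/
def IsMinBST {S : Finset Pt} (col : Pt → Bool) (G : SimpleGraph ↥S) : Prop :=
  IsBST col G ∧ ∀ G' : SimpleGraph ↥S, IsBST col G' → graphLen G ≤ graphLen G'

/-- Segment `e` (given by its endpoints) is cut at level `i` under shift `(x, y)`:
it meets some vertical line at abscissa `x + k·2⁻ⁱ` or some horizontal line at
ordinate `y + k·2⁻ⁱ`. -/
def CutAt (e : Pt × Pt) (i : ℕ) (x y : ℝ) : Prop :=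
  ∃ p ∈ segment ℝ e.1 e.2,
    (∃ k : ℤ, p 0 = x + (k : ℝ) * (2 : ℝ) ^ (-(i : ℤ))) ∨
    (∃ k : ℤ, p 1 = y + (k : ℝ) * (2 : ℝ) ^ (-(i : ℤ)))


namespace CutAux
open MeasureTheory Set
open scoped ENNReal

lemma cutset_eq (a b h : ℝ) : {x : ℝ | ∃ k : ℤ, x + k*h ∈ Icc a b} =
    ⋃ k : ℤ, (fun x => x + k*h) ⁻¹' Icc a b := by
  ext x; simp [mem_iUnion, mem_Icc, sub_eq_iff_eq_add]
  constructor
  · rintro ⟨k, h1, h2⟩; exact ⟨k, h1, by linarith⟩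
  · rintro ⟨k, h1, h2⟩; exact ⟨k, h1, by linarith⟩

lemma measurable_T (a b h : ℝ) : MeasurableSet {x : ℝ | ∃ k : ℤ, x + k*h ∈ Icc a b} := by
  rw [cutset_eq]
  exact MeasurableSet.iUnion fun k => (measurableSet_Icc).preimage (by measurability)

lemma iUnion_Ico_smul (h : ℝ) (hh : 0 < h) : (⋃ k : ℤ, Ico ((k:ℝ)*h) ((k+1)*h)) = univ := by
  ext x
  simp only [mem_iUnion, mem_Ico, mem_univ, iff_true]
  refine ⟨⌊x / h⌋, ?_, ?_⟩
  · have h1 : (⌊x/h⌋:ℝ) ≤ x / h := Int.floor_le _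
    have := mul_le_mul_of_nonneg_right h1 hh.le
    rwa [div_mul_cancel₀ _ hh.ne'] at this
  · have h1 : x / h < ⌊x/h⌋ + 1 := Int.lt_floor_add_one _
    have := mul_lt_mul_of_pos_right h1 hh
    rwa [div_mul_cancel₀ _ hh.ne'] at this

lemma pairwise_Ico (h : ℝ) (hh : 0 < h) :
    Pairwise (Function.onFun Disjoint fun k : ℤ => Ico ((k:ℝ)*h) ((k+1)*h)) := by
  intro k l hkl
  have : ∀ k l : ℤ, k < l → Disjoint (Ico ((k:ℝ)*h) ((k+1)*h)) (Ico ((l:ℝ)*h) ((l+1)*h)) := by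
    intro k l hkl
    apply Ico_disjoint_Ico_same.mono le_rfl (Ico_subset_Ico_left ?_)
    have : (k:ℝ) + 1 ≤ l := by exact_mod_cast hkl
    exact mul_le_mul_of_nonneg_right this hh.le
  rcases lt_or_gt_of_ne hkl with hlt | hlt
  · exact this k l hlt
  · exact (this l k hlt).symm

lemma tsum_slices (a b h : ℝ) (hh : 0 < h) :
    (∑' k : ℤ, volume (Icc a b ∩ Ico ((k:ℝ)*h) ((k+1)*h))) = volume (Icc a b) := by
  rw [← measure_iUnion]
  · rw [← inter_iUnion, iUnion_Ico_smul h hh, inter_univ]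
  · exact fun k l hkl => ((pairwise_Ico h hh) hkl).mono inter_subset_right inter_subset_right
  · exact fun k => measurableSet_Icc.inter measurableSet_Ico

lemma T_periodic (a b h : ℝ) (c : ℤ) (x : ℝ) :
    x + c*h ∈ {x : ℝ | ∃ k : ℤ, x + k*h ∈ Icc a b} ↔ x ∈ {x : ℝ | ∃ k : ℤ, x + k*h ∈ Icc a b} := by
  constructor
  · rintro ⟨k, hk⟩
    exact ⟨k + c, by push_cast; rw [show x + (k + c : ℝ)*h = x + c*h + k*h by ring]; exact hk⟩
  · rintro ⟨k, hk⟩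
    exact ⟨k - c, by push_cast; rw [show x + c*h + ((k:ℝ) - c)*h = x + k*h by ring]; exact hk⟩

lemma step1 (a b h : ℝ) (hh : 0 < h) :
    volume ({x : ℝ | ∃ k : ℤ, x + k*h ∈ Icc a b} ∩ Ico 0 h) ≤ ENNReal.ofReal (b - a) := by
  set T := {x : ℝ | ∃ k : ℤ, x + k*h ∈ Icc a b}
  have hsub : T ∩ Ico 0 h ⊆ ⋃ k : ℤ, ((fun x => x + k*h) ⁻¹' Icc a b ∩ Ico 0 h) := by
    rintro x ⟨⟨k, hk⟩, hx⟩
    exact mem_iUnion.2 ⟨k, hk, hx⟩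
  calc volume (T ∩ Ico 0 h) ≤ ∑' k : ℤ, volume ((fun x => x + k*h) ⁻¹' Icc a b ∩ Ico 0 h) :=
        le_trans (measure_mono hsub) (measure_iUnion_le _)
    _ = ∑' k : ℤ, volume (Icc a b ∩ Ico ((k:ℝ)*h) ((k+1)*h)) := by
        congr 1; funext k
        have : (fun x => x + k*h) ⁻¹' Icc a b ∩ Ico 0 h
            = (fun x => x + k*h) ⁻¹' (Icc a b ∩ Ico ((k:ℝ)*h) ((k+1)*h)) := by
          ext x
          simp only [mem_inter_iff, mem_preimage, mem_Ico, mem_Icc]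
          constructor
          · rintro ⟨h1, h2, h3⟩; exact ⟨h1, by linarith, by linarith⟩
          · rintro ⟨h1, h2, h3⟩; exact ⟨h1, by linarith, by linarith⟩
        rw [this, measure_preimage_add_right]
    _ = volume (Icc a b) := tsum_slices a b h hh
    _ ≤ ENNReal.ofReal (b - a) := by rw [Real.volume_Icc]

lemma step2 (a b h : ℝ) (hh : 0 < h) (n : ℕ) (hn : (n:ℝ) * h = 1) :
    volume ({x : ℝ | ∃ k : ℤ, x + k*h ∈ Icc a b} ∩ Icc 0 1)
      ≤ (n : ℝ≥0∞) * ENNReal.ofReal (b - a) := by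
  set T := {x : ℝ | ∃ k : ℤ, x + k*h ∈ Icc a b} with hT
  have hIco : volume (T ∩ Ico 0 1) ≤ (n : ℝ≥0∞) * ENNReal.ofReal (b - a) := by
    have hsub : T ∩ Ico 0 1 ⊆ ⋃ j ∈ Finset.range n, (T ∩ Ico ((j:ℝ)*h) ((j+1)*h)) := by
      rintro x ⟨hxT, hx0, hx1⟩
      have hj : ∃ j : ℕ, j < n ∧ x ∈ Ico ((j:ℝ)*h) ((j+1)*h) := by
        refine ⟨⌊x/h⌋.toNat, ?_, ?_, ?_⟩
        · have h0 : (0:ℤ) ≤ ⌊x/h⌋ := Int.floor_nonneg.2 (div_nonneg hx0 hh.le)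
          have : (⌊x/h⌋.toNat : ℝ) = (⌊x/h⌋ : ℝ) := by exact_mod_cast Int.toNat_of_nonneg h0
          by_contra hc
          push_neg at hc
          have : (n:ℝ) ≤ ⌊x/h⌋.toNat := by exact_mod_cast hc
          have h2 : (n:ℝ) * h ≤ (⌊x/h⌋:ℝ) * h := by
            rw [← Int.toNat_of_nonneg h0]; push_cast
            exact mul_le_mul_of_nonneg_right this hh.le
          have h3 : (⌊x/h⌋:ℝ) ≤ x / h := Int.floor_le _
          have h4 : (⌊x/h⌋:ℝ) * h ≤ x := by
            have := mul_le_mul_of_nonneg_right h3 hh.le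
            rwa [div_mul_cancel₀ _ hh.ne'] at this
          linarith [hn ▸ h2]
        · have h0 : (0:ℤ) ≤ ⌊x/h⌋ := Int.floor_nonneg.2 (div_nonneg hx0 hh.le)
          have hcast : (⌊x/h⌋.toNat : ℝ) = (⌊x/h⌋ : ℝ) := by exact_mod_cast Int.toNat_of_nonneg h0
          rw [hcast]
          have h3 : (⌊x/h⌋:ℝ) ≤ x / h := Int.floor_le _
          have := mul_le_mul_of_nonneg_right h3 hh.le
          rwa [div_mul_cancel₀ _ hh.ne'] at this
        · have h0 : (0:ℤ) ≤ ⌊x/h⌋ := Int.floor_nonneg.2 (div_nonneg hx0 hh.le)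
          have hcast : (⌊x/h⌋.toNat : ℝ) = (⌊x/h⌋ : ℝ) := by exact_mod_cast Int.toNat_of_nonneg h0
          rw [hcast]
          have h1 : x / h < ⌊x/h⌋ + 1 := Int.lt_floor_add_one _
          have := mul_lt_mul_of_pos_right h1 hh
          rwa [div_mul_cancel₀ _ hh.ne'] at this
      obtain ⟨j, hjn, hjx⟩ := hj
      exact mem_biUnion (Finset.mem_range.2 hjn) ⟨hxT, hjx⟩
    calc volume (T ∩ Ico 0 1) ≤ ∑ j ∈ Finset.range n, volume (T ∩ Ico ((j:ℝ)*h) ((j+1)*h)) :=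
          le_trans (measure_mono hsub) (measure_biUnion_finset_le _ _)
      _ ≤ ∑ j ∈ Finset.range n, ENNReal.ofReal (b - a) := by
          apply Finset.sum_le_sum
          intro j _
          have htrans : (fun x => x + (j:ℝ)*h) ⁻¹' (T ∩ Ico ((j:ℝ)*h) ((j+1)*h)) = T ∩ Ico 0 h := by
            ext x
            simp only [mem_inter_iff, mem_preimage, mem_Ico]
            constructor
            · rintro ⟨h1, h2, h3⟩
              refine ⟨((T_periodic a b h (j:ℤ) x).1 (by push_cast; exact h1)), by linarith, by linarith⟩
            · rintro ⟨h1, h2, h3⟩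
              refine ⟨by have := (T_periodic a b h (j:ℤ) x).2 h1; push_cast at this; exact this,
                by linarith, by linarith⟩
          have := measure_preimage_add_right volume ((j:ℝ)*h) (T ∩ Ico ((j:ℝ)*h) ((j+1)*h))
          rw [htrans] at this
          rw [← this]
          exact step1 a b h hh
      _ = (n : ℝ≥0∞) * ENNReal.ofReal (b - a) := by
          rw [Finset.sum_const, Finset.card_range, nsmul_eq_mul]
  have : T ∩ Icc 0 1 ⊆ (T ∩ Ico 0 1) ∪ {1} := by
    rintro x ⟨hxT, hx0, hx1⟩
    rcases lt_or_eq_of_le hx1 with h | h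
    · exact Or.inl ⟨hxT, hx0, h⟩
    · exact Or.inr (by simp [h])
  calc volume (T ∩ Icc 0 1) ≤ volume (T ∩ Ico 0 1) + volume ({1} : Set ℝ) :=
        le_trans (measure_mono this) (measure_union_le _ _)
    _ = volume (T ∩ Ico 0 1) := by rw [Real.volume_singleton, add_zero]
    _ ≤ _ := hIco


lemma proj_segment (u v : Pt) (j : Fin 2) :
    (fun p : Pt => p j) '' segment ℝ u v = Icc (min (u j) (v j)) (max (u j) (v j)) := by
  have := image_segment ℝ (EuclideanSpace.projₗ (𝕜 := ℝ) j).toAffineMap u v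
  simp only [LinearMap.coe_toAffineMap] at this
  have h2 : (fun p : Pt => p j) = ⇑(EuclideanSpace.projₗ (𝕜 := ℝ) j) := rfl
  rw [h2, this, segment_eq_uIcc, uIcc]
  rfl

lemma cutAt_iff (e : Pt × Pt) (i : ℕ) (x y : ℝ) :
    CutAt e i x y ↔
      (∃ k : ℤ, x + (k:ℝ) * (2:ℝ)^(-(i:ℤ)) ∈ Icc (min (e.1 0) (e.2 0)) (max (e.1 0) (e.2 0))) ∨
      (∃ k : ℤ, y + (k:ℝ) * (2:ℝ)^(-(i:ℤ)) ∈ Icc (min (e.1 1) (e.2 1)) (max (e.1 1) (e.2 1))) := by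
  constructor
  · rintro ⟨p, hp, hk | hk⟩
    · obtain ⟨k, hk⟩ := hk
      left; exact ⟨k, by rw [← hk, ← proj_segment e.1 e.2 0]; exact ⟨p, hp, rfl⟩⟩
    · obtain ⟨k, hk⟩ := hk
      right; exact ⟨k, by rw [← hk, ← proj_segment e.1 e.2 1]; exact ⟨p, hp, rfl⟩⟩
  · rintro (⟨k, hk⟩ | ⟨k, hk⟩)
    · rw [← proj_segment e.1 e.2 0] at hk
      obtain ⟨p, hp, hpk⟩ := hk
      exact ⟨p, hp, Or.inl ⟨k, hpk⟩⟩
    · rw [← proj_segment e.1 e.2 1] at hk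
      obtain ⟨p, hp, hpk⟩ := hk
      exact ⟨p, hp, Or.inr ⟨k, hpk⟩⟩

lemma abs_add_abs_le (u v : ℝ) : |u| + |v| ≤ Real.sqrt 2 * Real.sqrt (u^2 + v^2) := by
  rw [← Real.sqrt_mul (by norm_num)]
  rw [show |u| + |v| = Real.sqrt ((|u|+|v|)^2) from (Real.sqrt_sq (by positivity)).symm]
  apply Real.sqrt_le_sqrt
  nlinarith [sq_nonneg (|u| - |v|), sq_abs u, sq_abs v, abs_nonneg u, abs_nonneg v]

lemma dist_ge (u v : Pt) :
    |u 0 - v 0| + |u 1 - v 1| ≤ Real.sqrt 2 * dist u v := by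
  rw [EuclideanSpace.dist_eq, Fin.sum_univ_two, Real.dist_eq, Real.dist_eq]
  calc |u 0 - v 0| + |u 1 - v 1| ≤ Real.sqrt 2 * Real.sqrt ((u 0 - v 0)^2 + (u 1 - v 1)^2) :=
        abs_add_abs_le _ _
    _ = _ := by rw [sq_abs, sq_abs]

lemma hpow (i : ℕ) : ((2^i : ℕ):ℝ) * (2:ℝ)^(-(i:ℤ)) = 1 := by
  push_cast
  rw [← zpow_natCast (2:ℝ) i, ← zpow_add₀ (by norm_num : (2:ℝ) ≠ 0)]
  simp

lemma cutset_eq_2d (e : Pt × Pt) (i : ℕ) :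
    {z : ℝ × ℝ | CutAt e i z.1 z.2} =
      ({x : ℝ | ∃ k : ℤ, x + k*(2:ℝ)^(-(i:ℤ)) ∈ Icc (min (e.1 0) (e.2 0)) (max (e.1 0) (e.2 0))} ×ˢ univ)
      ∪ (univ ×ˢ {y : ℝ | ∃ k : ℤ, y + k*(2:ℝ)^(-(i:ℤ)) ∈ Icc (min (e.1 1) (e.2 1)) (max (e.1 1) (e.2 1))}) := by
  ext z
  simp only [mem_setOf_eq, mem_union, mem_prod, mem_univ, and_true, true_and]
  exact cutAt_iff e i z.1 z.2

lemma cutset_measurable (e : Pt × Pt) (i : ℕ) :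
    MeasurableSet {z : ℝ × ℝ | CutAt e i z.1 z.2} := by
  rw [cutset_eq_2d]
  exact ((measurable_T _ _ _).prod MeasurableSet.univ).union
    (MeasurableSet.univ.prod (measurable_T _ _ _))

lemma term_integrable (e : Pt × Pt) (i : ℕ) :
    IntegrableOn (fun z : ℝ × ℝ => if CutAt e i z.1 z.2 then (2:ℝ)^(-(i:ℤ)) else 0)
      (Icc (0:ℝ) 1 ×ˢ Icc (0:ℝ) 1) := by
  have hQ : volume (Icc (0:ℝ) 1 ×ˢ Icc (0:ℝ) 1) < ⊤ := by
    rw [Measure.volume_eq_prod, Measure.prod_prod, Real.volume_Icc]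
    norm_num
  have heq : (fun z : ℝ × ℝ => if CutAt e i z.1 z.2 then (2:ℝ)^(-(i:ℤ)) else 0)
      = Set.indicator {z : ℝ × ℝ | CutAt e i z.1 z.2} (fun _ => (2:ℝ)^(-(i:ℤ))) := by
    funext z
    by_cases hz : CutAt e i z.1 z.2 <;> simp [Set.indicator_apply, hz]
  rw [heq]
  exact (integrableOn_const hQ.ne).indicator (cutset_measurable e i)

lemma term_bound (e : Pt × Pt) (i : ℕ) :
    (∫ z in Icc (0:ℝ) 1 ×ˢ Icc (0:ℝ) 1,
        (if CutAt e i z.1 z.2 then (2:ℝ)^(-(i:ℤ)) else 0))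
      ≤ Real.sqrt 2 * dist e.1 e.2 := by
  set h : ℝ := (2:ℝ)^(-(i:ℤ)) with hdef
  have hh : 0 < h := by positivity
  set n : ℕ := 2^i with hndef
  have hn : (n:ℝ) * h = 1 := hpow i
  set A := min (e.1 0) (e.2 0); set B := max (e.1 0) (e.2 0)
  set C := min (e.1 1) (e.2 1); set D := max (e.1 1) (e.2 1)
  set T1 := {x : ℝ | ∃ k : ℤ, x + k*h ∈ Icc A B}
  set T2 := {y : ℝ | ∃ k : ℤ, y + k*h ∈ Icc C D}
  set Q : Set (ℝ × ℝ) := Icc (0:ℝ) 1 ×ˢ Icc (0:ℝ) 1 with hQdef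
  have heq : (fun z : ℝ × ℝ => if CutAt e i z.1 z.2 then h else 0)
      = Set.indicator {z : ℝ × ℝ | CutAt e i z.1 z.2} (fun _ => h) := by
    funext z
    by_cases hz : CutAt e i z.1 z.2 <;> simp [Set.indicator_apply, hz]
  rw [heq, setIntegral_indicator (cutset_measurable e i), setIntegral_const]
  -- measure bound
  have hsub : Q ∩ {z : ℝ × ℝ | CutAt e i z.1 z.2}
      ⊆ ((T1 ∩ Icc 0 1) ×ˢ Icc (0:ℝ) 1) ∪ (Icc (0:ℝ) 1 ×ˢ (T2 ∩ Icc 0 1)) := by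
    rintro z ⟨⟨hz1, hz2⟩, hzc⟩
    rcases (cutAt_iff e i z.1 z.2).1 hzc with hc | hc
    · exact Or.inl ⟨⟨hc, hz1⟩, hz2⟩
    · exact Or.inr ⟨hz1, hc, hz2⟩
  have hAB : A ≤ B := min_le_max
  have hCD : C ≤ D := min_le_max
  have hmb : volume (Q ∩ {z : ℝ × ℝ | CutAt e i z.1 z.2})
      ≤ ENNReal.ofReal ((n:ℝ) * (B - A) + (n:ℝ) * (D - C)) := by
    calc volume (Q ∩ {z : ℝ × ℝ | CutAt e i z.1 z.2})
        ≤ volume (((T1 ∩ Icc 0 1) ×ˢ Icc (0:ℝ) 1) ∪ (Icc (0:ℝ) 1 ×ˢ (T2 ∩ Icc 0 1))) :=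
          measure_mono hsub
      _ ≤ volume ((T1 ∩ Icc 0 1) ×ˢ Icc (0:ℝ) 1) + volume (Icc (0:ℝ) 1 ×ˢ (T2 ∩ Icc 0 1)) :=
          measure_union_le _ _
      _ = volume (T1 ∩ Icc 0 1) * volume (Icc (0:ℝ) 1)
          + volume (Icc (0:ℝ) 1) * volume (T2 ∩ Icc 0 1) := by
          rw [Measure.volume_eq_prod, Measure.prod_prod, Measure.prod_prod]
      _ = volume (T1 ∩ Icc 0 1) + volume (T2 ∩ Icc 0 1) := by
          rw [Real.volume_Icc]; norm_num
      _ ≤ (n : ℝ≥0∞) * ENNReal.ofReal (B - A) + (n : ℝ≥0∞) * ENNReal.ofReal (D - C) :=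
          add_le_add (step2 A B h hh n hn) (step2 C D h hh n hn)
      _ = ENNReal.ofReal ((n:ℝ) * (B - A) + (n:ℝ) * (D - C)) := by
          rw [ENNReal.ofReal_add (by nlinarith) (by nlinarith),
            ENNReal.ofReal_mul (by positivity), ENNReal.ofReal_mul (by positivity),
            ENNReal.ofReal_natCast]
  have htr : (volume (Q ∩ {z : ℝ × ℝ | CutAt e i z.1 z.2})).toReal
      ≤ (n:ℝ) * (B - A) + (n:ℝ) * (D - C) :=
    ENNReal.toReal_le_of_le_ofReal (by nlinarith) hmb
  have key : ((n:ℝ) * (B - A) + (n:ℝ) * (D - C)) * h = (B - A) + (D - C) := by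
    have : ((n:ℝ) * (B - A) + (n:ℝ) * (D - C)) * h = ((n:ℝ)*h) * ((B-A) + (D-C)) := by ring
    rw [this, hn, one_mul]
  calc (volume (Q ∩ {z : ℝ × ℝ | CutAt e i z.1 z.2})).toReal • h
      ≤ ((n:ℝ) * (B - A) + (n:ℝ) * (D - C)) * h := by
        rw [smul_eq_mul]; exact mul_le_mul_of_nonneg_right htr hh.le
    _ = (B - A) + (D - C) := key
    _ = |e.1 0 - e.2 0| + |e.1 1 - e.2 1| := by
        rw [show B - A = |e.1 0 - e.2 0| from (max_sub_min_eq_abs _ _).trans (abs_sub_comm _ _),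
          show D - C = |e.1 1 - e.2 1| from (max_sub_min_eq_abs _ _).trans (abs_sub_comm _ _)]
    _ ≤ Real.sqrt 2 * dist e.1 e.2 := dist_ge e.1 e.2
end CutAux

/-- For a finite set `E` of segments of total length `L`, the
expectation over a uniformly random shift `(x,y) ∈ [0,1]²` of
`Σ_{i=0}^{m} Σ_{e ∈ E} 2⁻ⁱ·[e is cut at level i]` is at most `√2·(m+1)·L`. -/
theorem expected_cut_cost_le
    (E : Finset (Pt × Pt)) (m : ℕ) (L : ℝ) (hL : L = ∑ e ∈ E, dist e.1 e.2) :
    (∫ z in (Set.Icc (0 : ℝ) 1 ×ˢ Set.Icc (0 : ℝ) 1),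
        ∑ i ∈ Finset.range (m + 1), ∑ e ∈ E,
          (if CutAt e i z.1 z.2 then (2 : ℝ) ^ (-(i : ℤ)) else 0))
      ≤ Real.sqrt 2 * (m + 1) * L := by
  classical
  have hQ := CutAux.term_integrable
  rw [MeasureTheory.integral_finset_sum _
    (fun i _ => MeasureTheory.integrable_finset_sum _ (fun e _ => CutAux.term_integrable e i))]
  have hstep : ∀ i ∈ Finset.range (m+1),
      (∫ z in (Set.Icc (0 : ℝ) 1 ×ˢ Set.Icc (0 : ℝ) 1),
          ∑ e ∈ E, (if CutAt e i z.1 z.2 then (2 : ℝ) ^ (-(i : ℤ)) else 0))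
        ≤ ∑ e ∈ E, Real.sqrt 2 * dist e.1 e.2 := by
    intro i _
    rw [MeasureTheory.integral_finset_sum _ (fun e _ => CutAux.term_integrable e i)]
    exact Finset.sum_le_sum fun e _ => CutAux.term_bound e i
  calc _ ≤ ∑ i ∈ Finset.range (m+1), ∑ e ∈ E, Real.sqrt 2 * dist e.1 e.2 :=
        Finset.sum_le_sum hstep
    _ = Real.sqrt 2 * (m + 1) * L := by
        simp only [← Finset.mul_sum, Finset.sum_const, Finset.card_range, nsmul_eq_mul, hL]
        push_cast
        ring
end
end

section
/- Let n be a power of 2, let i be a natural number with 2^{i} ≤ n, and let a ≤ b be real numbers. Then the number of indices j ∈ {0, 1, …, n−1} for which there exists an integer k with j/n + k·2^{−i} ∈ [a,b] is at most n·(b − a + 1/n)·2^{i}. (Equivalently: if x is chosen uniformly at random from the discrete set {0, 1/n, 2/n, …, (n−1)/n}, the probability that a fixed interval of length ℓ meets the family of points x + 2^{−i}·ℤ is at most (ℓ + 1/n)·2^{i}.) -/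
open scoped Classical

noncomputable section

/-- Let `n` be a power of `2`, `2ⁱ ≤ n`, and `a ≤ b`. The number of
indices `j ∈ {0, …, n−1}` for which some grid line `j/n + k·2⁻ⁱ` lies in `[a,b]` is
at most `n·(b − a + 1/n)·2ⁱ`. -/
theorem discrete_shift_hits_interval_le
    (n : ℕ) (hn : ∃ t : ℕ, n = 2 ^ t) (i : ℕ) (hi : 2 ^ i ≤ n)
    (a b : ℝ) (hab : a ≤ b) :
    (((Finset.range n).filter
        (fun j => ∃ k : ℤ,
          (j : ℝ) / (n : ℝ) + (k : ℝ) * (2 : ℝ) ^ (-(i : ℤ)) ∈ Set.Icc a b)).card : ℝ)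
      ≤ (n : ℝ) * (b - a + 1 / (n : ℝ)) * 2 ^ i := by
  simp only [Finset.bind_def, Finset.pure_def, Finset.sup_singleton_apply,
    Finset.filter_image]
  rw [Finset.card_image_of_injective _ Nat.cast_injective]
  obtain ⟨t, rfl⟩ := hn
  set n : ℕ := 2 ^ t with hn
  have hit : i ≤ t := by
    by_contra h
    push_neg at h
    exact absurd hi (Nat.pow_lt_pow_right one_lt_two h).not_ge
  set m : ℕ := 2 ^ (t - i) with hm
  have hm0 : 0 < m := Nat.pow_pos (by norm_num)
  have hnm : n = 2 ^ i * m := by rw [hm, hn, ← pow_add]; congr 1; omega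
  have hn0 : (0:ℝ) < n := by positivity
  have h2i0 : (0:ℝ) < (2:ℝ) ^ i := by positivity
  have hmn : (m : ℝ) / (n : ℝ) = (2 : ℝ) ^ (-(i : ℤ)) := by
    rw [zpow_neg, zpow_natCast, inv_eq_one_div, div_eq_div_iff hn0.ne' h2i0.ne', hnm]
    push_cast
    ring
  set F := (Finset.range n).filter
        (fun j : ℕ => ∃ k : ℤ,
          (j : ℝ) / (n : ℝ) + (k : ℝ) * (2 : ℝ) ^ (-(i : ℤ)) ∈ Set.Icc a b) with hF
  have key : ∀ j ∈ F, ∃ ℓ : ℤ, ℓ ∈ Finset.Icc ⌈(n:ℝ)*a⌉ ⌊(n:ℝ)*b⌋ ∧ ℓ % m = (j:ℤ) % m := by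
    intro j hj
    rw [hF, Finset.mem_filter] at hj
    obtain ⟨hjr, k, hk1, hk2⟩ := hj
    refine ⟨(j:ℤ) + k * m, ?_, ?_⟩
    · rw [Finset.mem_Icc]
      have h1 : (((j:ℤ) + k * m : ℤ) : ℝ) = (n:ℝ) * ((j : ℝ) / (n : ℝ) + (k : ℝ) * (2 : ℝ) ^ (-(i : ℤ))) := by
        rw [← hmn]
        push_cast
        field_simp
      constructor
      · rw [Int.ceil_le, h1]
        exact mul_le_mul_of_nonneg_left hk1 hn0.le
      · rw [Int.le_floor, h1]
        exact mul_le_mul_of_nonneg_left hk2 hn0.le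
    · simp [Int.add_mul_emod_self_right]
  choose! f hf1 hf2 using key
  have hinj : (F.card : ℝ) ≤ ((Finset.Icc ⌈(n:ℝ)*a⌉ ⌊(n:ℝ)*b⌋ ×ˢ Finset.range (2^i)).card : ℝ) := by
    have this : F.card ≤ (Finset.Icc ⌈(n:ℝ)*a⌉ ⌊(n:ℝ)*b⌋ ×ˢ Finset.range (2^i)).card :=
      Finset.card_le_card_of_injOn (fun j : ℕ => (f j, j / m))
      (fun j hj => Finset.mem_product.mpr ⟨hf1 j hj, Finset.mem_range.mpr (by
        rw [Nat.div_lt_iff_lt_mul hm0]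
        have := Finset.mem_range.mp (Finset.mem_filter.mp hj).1
        omega)⟩)
      (fun j1 h1 j2 h2 heq => by
        simp only [Prod.mk.injEq] at heq
        obtain ⟨he1, he2⟩ := heq
        have m1 := hf2 j1 h1
        have m2 := hf2 j2 h2
        rw [he1] at m1
        have hmm : j1 % m = j2 % m := by omega
        have d1 := Nat.div_add_mod j1 m
        have d2 := Nat.div_add_mod j2 m
        rw [he2] at d1
        omega)
    exact_mod_cast this
  refine hinj.trans ?_
  rw [Finset.card_product, Finset.card_range, Int.card_Icc]
  have hb : ((⌊(n:ℝ)*b⌋ + 1 - ⌈(n:ℝ)*a⌉).toNat : ℝ) ≤ (n:ℝ)*(b-a) + 1 := by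
    rcases le_or_gt (⌊(n:ℝ)*b⌋ + 1 - ⌈(n:ℝ)*a⌉) 0 with h | h
    · rw [Int.toNat_of_nonpos h]
      push_cast
      nlinarith [mul_le_mul_of_nonneg_left hab hn0.le]
    · have hz : ((⌊(n:ℝ)*b⌋ + 1 - ⌈(n:ℝ)*a⌉).toNat : ℝ)
          = ((⌊(n:ℝ)*b⌋:ℝ) + 1 - (⌈(n:ℝ)*a⌉:ℝ)) := by
        rw [← Int.cast_natCast, Int.toNat_of_nonneg h.le]; push_cast; ring
      rw [hz]
      have h3 := Int.floor_le ((n:ℝ)*b)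
      have h4 := Int.le_ceil ((n:ℝ)*a)
      linarith
  have hrhs : (n : ℝ) * (b - a + 1 / (n : ℝ)) = (n:ℝ)*(b-a) + 1 := by
    field_simp
  rw [hrhs]
  push_cast
  nlinarith [mul_le_mul_of_nonneg_right hb h2i0.le]
end
end

section
/- Every finite set of points in the Euclidean plane in general position, colored with an arbitrary set of colors such that not all points have the same color, admits a plane properly-colored spanning tree: a spanning tree, drawn with straight-line edges no two of which cross, in which the two endpoints of every edge have different colors. -/
open scoped Classical

noncomputable section

/- Auxiliary lemmas -/
lemma collinear_triple (x y z : Pt) (r : ℝ) (h : z - x = r • (y - x)) :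
    Collinear ℝ ({x, y, z} : Set Pt) := by
  rw [collinear_iff_of_mem (Set.mem_insert x _)]
  refine ⟨y - x, ?_⟩
  rintro w (rfl | rfl | rfl)
  · exact ⟨0, by simp⟩
  · exact ⟨1, by simp⟩
  · exact ⟨r, by rw [← h, vadd_eq_add, sub_add_cancel]⟩

lemma between_of_mul_neg {x u v : ℝ} (h : (x - u) * (x - v) < 0) :
    (u < x ∧ x < v) ∨ (v < x ∧ x < u) := by
  rcases le_or_gt x u with h1 | h1
  · rcases le_or_gt x v with h2 | h2
    · nlinarith
    · exact Or.inr ⟨h2, lt_of_le_of_ne h1 (by rintro rfl; nlinarith)⟩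
  · rcases le_or_gt v x with h2 | h2
    · nlinarith
    · exact Or.inl ⟨h1, h2⟩

lemma mediant_key {hv gv hm gm l mu : ℝ} (hhv : 0 < hv) (hhm : 0 < hm)
    (hl : 0 < l) (hmu : 0 < mu) (hD : hv * gm - hm * gv ≠ 0) :
    0 < l * hv + mu * hm ∧
      ((l * gv + mu * gm) / (l * hv + mu * hm) - gv / hv) *
        ((l * gv + mu * gm) / (l * hv + mu * hm) - gm / hm) < 0 := by
  have hx : 0 < l * hv + mu * hm := by positivity
  refine ⟨hx, ?_⟩
  have key : ((l * gv + mu * gm) / (l * hv + mu * hm) - gv / hv) *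
      ((l * gv + mu * gm) / (l * hv + mu * hm) - gm / hm)
      = -((l * mu * (hv * gm - hm * gv) ^ 2) / ((l * hv + mu * hm) ^ 2 * (hv * hm))) := by
    field_simp
    ring
  rw [key]
  have : 0 < (l * mu * (hv * gm - hm * gv) ^ 2) / ((l * hv + mu * hm) ^ 2 * (hv * hm)) := by
    apply div_pos
    · have := pow_pos (abs_pos.mpr hD) 2
      positivity
    · positivity
  linarith

lemma real_chords {v1 m1 v2 m2 τ : ℝ}
    (h1 : (τ - v1) * (τ - m1) < 0) (h2 : (τ - v2) * (τ - m2) < 0)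
    (h3 : ¬(m1 < m2 ∧ m2 < v1)) (h4 : ¬(v1 < m2 ∧ m2 < m1))
    (h3' : ¬(m2 < m1 ∧ m1 < v2)) (h4' : ¬(v2 < m1 ∧ m1 < m2))
    (h5 : v1 < m1 → v1 < m2) (h6 : v2 < m2 → v2 < m1)
    (hmm : m1 ≠ m2) : False := by
  rcases between_of_mul_neg h1 with ⟨a1, a2⟩ | ⟨a1, a2⟩ <;>
    rcases between_of_mul_neg h2 with ⟨b1, b2⟩ | ⟨b1, b2⟩
  · have e5 := h5 (by linarith)
    have e6 := h6 (by linarith)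
    rcases lt_or_gt_of_ne hmm with h | h
    · exact h4' ⟨e6, h⟩
    · exact h4 ⟨e5, h⟩
  · have e5 := h5 (by linarith)
    exact h4 ⟨e5, by linarith⟩
  · have e6 := h6 (by linarith)
    exact h4' ⟨e6, by linarith⟩
  · rcases lt_or_gt_of_ne hmm with h | h
    · exact h3 ⟨h, by linarith⟩
    · exact h3' ⟨h, by linarith⟩

lemma reach_closed {V : Type*} {G : SimpleGraph V} {Q : V → Prop}
    (hQ : ∀ a b, G.Adj a b → Q a → Q b) {u x : V} (h : G.Reachable u x) : Q u → Q x := by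
  obtain ⟨w⟩ := h
  induction w with
  | nil => exact fun h => h
  | cons hadj p ih => exact fun hu => ih (hQ _ _ hadj hu)


/-- Every finite point set in general position, colored with an
arbitrary set of colors such that not all points have the same color, admits a plane
properly-colored spanning tree. -/
theorem exists_plane_properly_colored_spanning_tree
    {C : Type*} (S : Finset Pt) (col : Pt → C) (hgp : GenPos S)
    (hne : ∃ p ∈ S, ∃ q ∈ S, col p ≠ col q) :
    ∃ G : SimpleGraph ↥S, G.IsTree ∧
      (∀ u v : ↥S, G.Adj u v → col ↑u ≠ col ↑v) ∧ PlaneGraph G := by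
  classical
  obtain ⟨p₀, hp₀, q₀, hq₀, hpq⟩ := hne
  set b : Pt → Bool := fun x => decide (col x = col p₀) with hbdef
  have hbcol : ∀ x y : Pt, b x ≠ b y → col x ≠ col y := by
    intro x y h hxy
    exact h (by simp [hbdef, hxy])
  have hbp₀ : b p₀ = true := by simp [hbdef]
  have hbq₀ : b q₀ = false := by simp [hbdef]; exact fun h => hpq h.symm
  -- generic direction
  set T : Finset ℝ :=
    (S ×ˢ S).image (fun qr => -((qr.1 0 - qr.2 0) / (qr.1 1 - qr.2 1))) with hT
  obtain ⟨a, haT⟩ := Infinite.exists_notMem_finset T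
  set f : Pt → ℝ := fun x => x 0 + a * x 1 with hf
  have hinj : ∀ q ∈ S, ∀ r ∈ S, f q = f r → q = r := by
    intro q hq r hr hfe
    simp only [hf] at hfe
    by_cases h1 : q 1 = r 1
    · have h0 : q 0 = r 0 := by rw [h1] at hfe; linarith
      ext i
      fin_cases i
      · exact h0
      · exact h1
    · exfalso
      apply haT
      have ha : a = -((q 0 - r 0) / (q 1 - r 1)) := by
        have h1' : q 1 - r 1 ≠ 0 := fun h => h1 (by linarith)
        field_simp
        linarith
      rw [ha, hT]
      exact Finset.mem_image.mpr ⟨(q, r), Finset.mem_product.mpr ⟨hq, hr⟩, rfl⟩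
  obtain ⟨p, hpS, hpmin⟩ := S.exists_min_image f ⟨p₀, hp₀⟩
  have hpstrict : ∀ q ∈ S, q ≠ p → f p < f q := by
    intro q hq hqp
    refine lt_of_le_of_ne (hpmin q hq) (fun h => hqp ?_)
    exact hinj q hq p hpS h.symm
  set P : ↥S := ⟨p, hpS⟩ with hPdef
  have hPne : ∀ y : ↥S, y ≠ P ↔ (↑y : Pt) ≠ p := by
    intro y
    constructor
    · exact fun h hh => h (Subtype.ext hh)
    · intro h hh
      exact h (by rw [hh])
  set fH : Pt → ℝ := fun x => (x 0 - p 0) + a * (x 1 - p 1) with hfH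
  set fG : Pt → ℝ := fun x => -a * (x 0 - p 0) + (x 1 - p 1) with hfG
  have hHpos : ∀ v : ↥S, v ≠ P → 0 < fH ↑v := by
    intro v hv
    have := hpstrict ↑v v.2 ((hPne v).mp hv)
    simp only [hf] at this
    simp only [hfH]
    linarith
  have hpara : ∀ q r : ↥S, q ≠ P → r ≠ P → q ≠ r →
      fH ↑q * fG ↑r - fH ↑r * fG ↑q ≠ 0 := by
    intro q r hqP hrP hqr hD
    have hHq := hHpos q hqP
    have hcross : ((↑q : Pt) 0 - p 0) * ((↑r : Pt) 1 - p 1)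
        - ((↑r : Pt) 0 - p 0) * ((↑q : Pt) 1 - p 1) = 0 := by
      have hfac : (((↑q : Pt) 0 - p 0) * ((↑r : Pt) 1 - p 1)
          - ((↑r : Pt) 0 - p 0) * ((↑q : Pt) 1 - p 1)) * (1 + a ^ 2) = 0 := by
        simp only [hfH, hfG] at hD
        linear_combination hD
      rcases mul_eq_zero.mp hfac with h | h
      · exact h
      · nlinarith [sq_nonneg a]
    have key : (↑r : Pt) - p = (fH ↑r / fH ↑q) • ((↑q : Pt) - p) := by
      ext i
      have hHq' : fH ↑q ≠ 0 := ne_of_gt hHq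
      simp only [hfH] at hHq' ⊢
      fin_cases i
      · simp
        field_simp
        linear_combination (-a) * hcross
      · simp
        field_simp
        linear_combination hcross
    have hcol := collinear_triple p ↑q ↑r (fH ↑r / fH ↑q) key
    exact hgp p hpS ↑q q.2 ↑r r.2
      (fun h => ((hPne q).mp hqP) h.symm)
      (fun h => ((hPne r).mp hrP) h.symm)
      (fun h => hqr (Subtype.ext h)) hcol
  set t : ↥S → ℝ := fun v => fG ↑v / fH ↑v with ht
  have htinj : ∀ v w : ↥S, v ≠ P → w ≠ P → v ≠ w → t v ≠ t w := by
    intro v w hvP hwP hvw he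
    apply hpara v w hvP hwP hvw
    have h1 := hHpos v hvP
    have h2 := hHpos w hwP
    simp only [ht] at he
    field_simp at he
    linarith
  -- opposite-colored vertex exists
  have hOppne : ∃ w : ↥S, b ↑w ≠ b p := by
    by_cases h : b p = true
    · refine ⟨⟨q₀, hq₀⟩, ?_⟩
      show b q₀ ≠ b p
      rw [hbq₀, h]
      simp
    · have hbp : b p = false := by simpa using h
      refine ⟨⟨p₀, hp₀⟩, ?_⟩
      show b p₀ ≠ b p
      rw [hbp₀, hbp]
      simp
  have hbPp : b ↑P = b p := rfl
  -- parent existence for same-colored vertices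
  have hparex : ∀ v : ↥S, v ≠ P → b ↑v = b p → ∃ m : ↥S, b ↑m ≠ b p ∧
      (∀ w : ↥S, b ↑w ≠ b p →
        ¬(t m < t w ∧ t w < t v) ∧ ¬(t v < t w ∧ t w < t m)) ∧
      (t v < t m → ∀ w : ↥S, b ↑w ≠ b p → t v < t w) := by
    intro v hvP hvc
    have hwP : ∀ w : ↥S, b ↑w ≠ b p → w ≠ P := by
      intro w h hh
      exact h (by rw [hh])
    have hwv : ∀ w : ↥S, b ↑w ≠ b p → t w ≠ t v := by
      intro w h
      exact htinj w v (hwP w h) hvP (fun hh => h (hh ▸ hvc))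
    set L : Finset ↥S := Finset.univ.filter (fun w => b ↑w ≠ b p ∧ t w < t v) with hL
    by_cases hLne : L.Nonempty
    · obtain ⟨m, hmL, hmax⟩ := L.exists_max_image t hLne
      simp only [hL, Finset.mem_filter, Finset.mem_univ, true_and] at hmL
      refine ⟨m, hmL.1, ?_, ?_⟩
      · intro w hw
        constructor
        · rintro ⟨h1, h2⟩
          have : w ∈ L := by
            simp only [hL, Finset.mem_filter, Finset.mem_univ, true_and]
            exact ⟨hw, h2⟩
          exact absurd (hmax w this) (not_le.mpr h1)
        · rintro ⟨h1, h2⟩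
          exact absurd hmL.2 (not_lt.mpr (le_of_lt (lt_trans h1 h2)))
      · intro h
        exact absurd hmL.2 (not_lt.mpr (le_of_lt h))
    · have hall : ∀ w : ↥S, b ↑w ≠ b p → t v < t w := by
        intro w hw
        rcases lt_or_gt_of_ne (hwv w hw) with h | h
        · exfalso
          apply hLne
          refine ⟨w, ?_⟩
          simp only [hL, Finset.mem_filter, Finset.mem_univ, true_and]
          exact ⟨hw, h⟩
        · exact h
      obtain ⟨w₀, hw₀⟩ := hOppne
      set O : Finset ↥S := Finset.univ.filter (fun w => b ↑w ≠ b p) with hO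
      have hOne : O.Nonempty := ⟨w₀, by simp [hO, hw₀]⟩
      obtain ⟨m, hmO, hmin⟩ := O.exists_min_image t hOne
      simp only [hO, Finset.mem_filter, Finset.mem_univ, true_and] at hmO
      refine ⟨m, hmO, ?_, fun _ => hall⟩
      intro w hw
      constructor
      · rintro ⟨h1, h2⟩
        exact absurd (hall m hmO) (not_lt.mpr (le_of_lt (lt_trans h1 h2)))
      · rintro ⟨h1, h2⟩
        have : w ∈ O := by simp [hO, hw]
        exact absurd (hmin w this) (not_le.mpr h2)
  -- parent function
  set pr : ↥S → ↥S := fun v =>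
    if h : v ≠ P ∧ b ↑v = b p then Classical.choose (hparex v h.1 h.2) else P with hprdef
  have hpr_spec : ∀ v : ↥S, ∀ (h1 : v ≠ P) (h2 : b ↑v = b p),
      b ↑(pr v) ≠ b p ∧
      (∀ w : ↥S, b ↑w ≠ b p →
        ¬(t (pr v) < t w ∧ t w < t v) ∧ ¬(t v < t w ∧ t w < t (pr v))) ∧
      (t v < t (pr v) → ∀ w : ↥S, b ↑w ≠ b p → t v < t w) := by
    intro v h1 h2
    have : pr v = Classical.choose (hparex v h1 h2) := by
      simp only [hprdef]
      rw [dif_pos ⟨h1, h2⟩]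
    rw [this]
    exact Classical.choose_spec (hparex v h1 h2)
  have hpr_opp : ∀ v : ↥S, b ↑v ≠ b p → pr v = P := by
    intro v h
    simp only [hprdef]
    rw [dif_neg]
    tauto
  have hprP : pr P = P := by
    simp only [hprdef]
    rw [dif_neg]
    tauto
  have hpr_col : ∀ v : ↥S, v ≠ P → b ↑(pr v) ≠ b ↑v := by
    intro v hv
    by_cases h : b ↑v = b p
    · have := (hpr_spec v hv h).1
      rw [h]
      exact this
    · rw [hpr_opp v h, hbPp]
      exact fun hh => h hh.symm
  have hpr_ne : ∀ v : ↥S, v ≠ P → pr v ≠ v := by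
    intro v hv hh
    exact hpr_col v hv (by rw [hh])
  have hpr_oppP : ∀ v : ↥S, v ≠ P → b ↑v = b p → pr v ≠ P := by
    intro v hv hc hh
    have := (hpr_spec v hv hc).1
    rw [hh] at this
    exact this hbPp
  -- the graph
  set G : SimpleGraph ↥S :=
    { Adj := fun u v => u ≠ v ∧ (pr u = v ∨ pr v = u)
      symm := by
        constructor
        rintro u v ⟨h1, h2⟩
        exact ⟨h1.symm, h2.symm⟩
      loopless := ⟨fun v h => h.1 rfl⟩ } with hGdef
  have hadj_cases : ∀ u v : ↥S, G.Adj u v →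
      (u ≠ P ∧ pr u = v) ∨ (v ≠ P ∧ pr v = u) := by
    rintro u v ⟨h1, h2 | h2⟩
    · left
      refine ⟨?_, h2⟩
      rintro rfl
      rw [hprP] at h2
      exact h1 h2
    · right
      refine ⟨?_, h2⟩
      rintro rfl
      rw [hprP] at h2
      exact h1 h2.symm
  have hadj_pr : ∀ v : ↥S, v ≠ P → G.Adj v (pr v) :=
    fun v hv => ⟨fun h => hpr_ne v hv h.symm, Or.inl rfl⟩
  -- uniqueness of neighbors for classification
  have huniq : ∀ u y : ↥S, u ≠ P → b ↑u = b p → G.Adj u y → y = pr u := by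
    intro u y huP huc hadj
    rcases hadj_cases u y hadj with ⟨_, h⟩ | ⟨hyP, h⟩
    · exact h.symm
    · exfalso
      by_cases hyc : b ↑y = b p
      · have := (hpr_spec y hyP hyc).1
        rw [h] at this
        exact this huc
      · rw [hpr_opp y hyc] at h
        exact huP h.symm
  -- properly colored
  have hproper : ∀ u v : ↥S, G.Adj u v → col ↑u ≠ col ↑v := by
    intro u v hadj
    apply hbcol
    rcases hadj_cases u v hadj with ⟨h1, h2⟩ | ⟨h1, h2⟩
    · rw [← h2]
      exact (hpr_col u h1).symm ∘ Eq.symm ∘ Eq.symm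
    · rw [← h2]
      exact hpr_col v h1
  -- connectivity
  have hreach : ∀ v : ↥S, G.Reachable v P := by
    intro v
    by_cases hvP : v = P
    · rw [hvP]
    · by_cases hc : b ↑v = b p
      · have h1 : G.Adj v (pr v) := hadj_pr v hvP
        have ho := (hpr_spec v hvP hc).1
        have hoP : pr v ≠ P := hpr_oppP v hvP hc
        have h2 : G.Adj (pr v) P := by
          have h3 := hadj_pr (pr v) hoP
          rwa [hpr_opp (pr v) ho] at h3
        exact h1.reachable.trans h2.reachable
      · have h3 := hadj_pr v hvP
        rw [hpr_opp v hc] at h3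
        exact h3.reachable
  have hconn : G.Connected := by
    have : Nonempty ↥S := ⟨P⟩
    exact ⟨fun u v => (hreach u).trans (hreach v).symm⟩
  -- acyclicity via bridges
  have hacyc : G.IsAcyclic := by
    rw [SimpleGraph.isAcyclic_iff_forall_adj_isBridge]
    have key : ∀ u v : ↥S, G.Adj u v → u ≠ P → pr u = v →
        ¬ (G \ SimpleGraph.fromEdgeSet {s(u, v)}).Reachable u v := by
      intro u v hadj huP hpru hR
      have hdel : ∀ x y : ↥S, (G \ SimpleGraph.fromEdgeSet {s(u, v)}).Adj x y →
          G.Adj x y ∧ s(x, y) ≠ s(u, v) := by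
        intro x y hxy
        rw [SimpleGraph.sdiff_adj, SimpleGraph.fromEdgeSet_adj] at hxy
        exact ⟨hxy.1, fun h => hxy.2 ⟨by rw [h]; exact Set.mem_singleton _, hxy.1.ne⟩⟩
      by_cases hcu : b ↑u = b p
      · -- u is a leaf
        have hclosed : ∀ x y : ↥S, (G \ SimpleGraph.fromEdgeSet {s(u, v)}).Adj x y →
            x = u → y = u := by
          intro x y hxy hx
          rcases hdel x y hxy with ⟨hGxy, hnee⟩
          subst hx
          have hy : y = v := by
            rw [← hpru]
            exact huniq x y huP hcu hGxy
          exact absurd (by rw [hy]) hnee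
        have hvu : v = u := reach_closed hclosed hR rfl
        exact hadj.ne hvu.symm
      · -- spoke u–P
        have hv : v = P := by rw [← hpru, hpr_opp u hcu]
        have hclosed : ∀ x y : ↥S, (G \ SimpleGraph.fromEdgeSet {s(u, v)}).Adj x y →
            (x = u ∨ (x ≠ P ∧ b ↑x = b p ∧ pr x = u)) →
            (y = u ∨ (y ≠ P ∧ b ↑y = b p ∧ pr y = u)) := by
          intro x y hxy hQx
          rcases hdel x y hxy with ⟨hGxy, hnee⟩
          rcases hQx with rfl | ⟨hxP, hxc, hxpr⟩
          · rcases hadj_cases x y hGxy with ⟨_, h⟩ | ⟨hyP, h⟩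
            · exfalso
              apply hnee
              rw [← h, hpru]
            · by_cases hyc : b ↑y = b p
              · exact Or.inr ⟨hyP, hyc, h⟩
              · exfalso
                rw [hpr_opp y hyc] at h
                exact huP h.symm
          · rcases hadj_cases x y hGxy with ⟨_, h⟩ | ⟨hyP, h⟩
            · left
              rw [← h, hxpr]
            · exfalso
              by_cases hyc : b ↑y = b p
              · have h2 := (hpr_spec y hyP hyc).1
                rw [h] at h2
                exact h2 hxc
              · rw [hpr_opp y hyc] at h
                exact hxP h.symm
        have hQv := reach_closed hclosed hR (Or.inl rfl)
        rcases hQv with h | ⟨h, _⟩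
        · exact hadj.ne h.symm
        · exact h hv
    intro u v hadj
    rw [SimpleGraph.isBridge_iff]
    show ¬ (G \ SimpleGraph.fromEdgeSet {s(u, v)}).Reachable u v
    rcases hadj_cases u v hadj with ⟨huP, hpru⟩ | ⟨hvP, hprv⟩
    · exact key u v hadj huP hpru
    · intro hR
      apply key v u hadj.symm hvP hprv
      rw [Sym2.eq_swap]
      exact hR.symm
  -- geometry: affine evaluation of fH, fG on open segments
  have hopen_aff : ∀ (A B x : Pt), x ∈ openSegment ℝ A B →
      ∃ l mu : ℝ, 0 < l ∧ 0 < mu ∧ l + mu = 1 ∧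
        fH x = l * fH A + mu * fH B ∧ fG x = l * fG A + mu * fG B := by
    intro A B x hx
    obtain ⟨l, mu, hl, hmu, hlmu, hxe⟩ := hx
    refine ⟨l, mu, hl, hmu, hlmu, ?_, ?_⟩
    · subst hxe
      simp only [hfH]
      simp only [PiLp.add_apply, PiLp.smul_apply, smul_eq_mul]
      linear_combination (p 0 + a * p 1) * hlmu
    · subst hxe
      simp only [hfG]
      simp only [PiLp.add_apply, PiLp.smul_apply, smul_eq_mul]
      linear_combination (-a * p 0 + p 1) * hlmu
  have hseg_t : ∀ (v m : ↥S) (x : Pt), v ≠ P → m ≠ P → v ≠ m →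
      x ∈ openSegment ℝ (↑v : Pt) ↑m →
      0 < fH x ∧ (fG x / fH x - t v) * (fG x / fH x - t m) < 0 := by
    intro v m x hvP hmP hvm hx
    obtain ⟨l, mu, hl, hmu, hlmu, hHx, hGx⟩ := hopen_aff ↑v ↑m x hx
    have hD := hpara v m hvP hmP hvm
    have hmk := mediant_key (hHpos v hvP) (hHpos m hmP) hl hmu hD
    rw [hHx, hGx]
    simp only [ht]
    exact hmk
  have hspoke_t : ∀ (w : ↥S) (x : Pt), w ≠ P →
      x ∈ openSegment ℝ p (↑w : Pt) → 0 < fH x ∧ fG x / fH x = t w := by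
    intro w x hwP hx
    obtain ⟨l, mu, hl, hmu, hlmu, hHx, hGx⟩ := hopen_aff p ↑w x hx
    have hHp : fH p = 0 := by simp [hfH]
    have hGp : fG p = 0 := by simp [hfG]
    rw [hHp] at hHx
    rw [hGp] at hGx
    have hHx' : fH x = mu * fH ↑w := by rw [hHx]; ring
    have hGx' : fG x = mu * fG ↑w := by rw [hGx]; ring
    refine ⟨by rw [hHx']; exact mul_pos hmu (hHpos w hwP), ?_⟩
    rw [hHx', hGx', mul_div_mul_left _ _ (ne_of_gt hmu)]
  -- crossing segments sharing an endpoint are impossible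
  have hshared : ∀ (A B Cc : ↥S) (x : Pt), A ≠ B → A ≠ Cc → B ≠ Cc →
      x ∈ openSegment ℝ (↑A : Pt) ↑B → x ∈ openSegment ℝ (↑A : Pt) ↑Cc → False := by
    intro A B Cc x hAB hAC hBC hx1 hx2
    rw [openSegment_eq_image'] at hx1 hx2
    obtain ⟨θ1, hθ1, he1⟩ := hx1
    obtain ⟨θ2, hθ2, he2⟩ := hx2
    rw [← he2] at he1
    have hsm : θ1 • ((↑B : Pt) - ↑A) = θ2 • ((↑Cc : Pt) - ↑A) := add_left_cancel he1
    have hkey : (↑B : Pt) - ↑A = (θ1⁻¹ * θ2) • ((↑Cc : Pt) - ↑A) := by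
      rw [mul_smul, ← hsm, inv_smul_smul₀ (ne_of_gt hθ1.1)]
    exact hgp ↑A A.2 ↑Cc Cc.2 ↑B B.2
      (Subtype.coe_injective.ne hAC) (Subtype.coe_injective.ne hAB)
      (Subtype.coe_injective.ne hBC.symm)
      (collinear_triple ↑A ↑Cc ↑B _ hkey)
  -- core: two tree edges (in parent form) cannot cross when all four ends differ
  have hcore : ∀ w1 w2 : ↥S, w1 ≠ P → w2 ≠ P →
      w1 ≠ w2 → w1 ≠ pr w2 → pr w1 ≠ w2 → pr w1 ≠ pr w2 →
      ∀ x : Pt, x ∈ openSegment ℝ (↑w1 : Pt) ↑(pr w1) →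
        x ∈ openSegment ℝ (↑w2 : Pt) ↑(pr w2) → False := by
    have hchordspoke : ∀ w1 w2 : ↥S, w1 ≠ P → w2 ≠ P → b ↑w1 = b p → ¬ b ↑w2 = b p →
        ∀ x : Pt, x ∈ openSegment ℝ (↑w1 : Pt) ↑(pr w1) →
          x ∈ openSegment ℝ (↑w2 : Pt) ↑(pr w2) → False := by
      intro w1 w2 h1P h2P hc1 hc2 x hx1 hx2
      obtain ⟨ho1, hB11, _⟩ := hpr_spec w1 h1P hc1
      have hm1P : pr w1 ≠ P := hpr_oppP w1 h1P hc1
      have hw1m : w1 ≠ pr w1 := fun h => ho1 (h ▸ hc1)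
      obtain ⟨_, h1lt⟩ := hseg_t w1 (pr w1) x h1P hm1P hw1m hx1
      have hvP2 : pr w2 = P := hpr_opp w2 hc2
      rw [hvP2] at hx2
      have hx2' : x ∈ openSegment ℝ p (↑w2 : Pt) := by
        rw [openSegment_symm]
        exact hx2
      obtain ⟨_, hteq⟩ := hspoke_t w2 x h2P hx2'
      have hb := hB11 w2 hc2
      rw [hteq] at h1lt
      rcases between_of_mul_neg h1lt with ⟨ha1, ha2⟩ | ⟨ha1, ha2⟩
      · exact hb.2 ⟨ha1, ha2⟩
      · exact hb.1 ⟨ha1, ha2⟩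
    intro w1 w2 h1P h2P d1 d2 d3 d4 x hx1 hx2
    by_cases hc1 : b ↑w1 = b p <;> by_cases hc2 : b ↑w2 = b p
    · -- both chords
      obtain ⟨ho1, hB11, hB21⟩ := hpr_spec w1 h1P hc1
      obtain ⟨ho2, hB12, hB22⟩ := hpr_spec w2 h2P hc2
      have hm1P : pr w1 ≠ P := hpr_oppP w1 h1P hc1
      have hm2P : pr w2 ≠ P := hpr_oppP w2 h2P hc2
      have hw1m : w1 ≠ pr w1 := fun h => ho1 (h ▸ hc1)
      have hw2m : w2 ≠ pr w2 := fun h => ho2 (h ▸ hc2)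
      obtain ⟨hxpos, h1lt⟩ := hseg_t w1 (pr w1) x h1P hm1P hw1m hx1
      obtain ⟨_, h2lt⟩ := hseg_t w2 (pr w2) x h2P hm2P hw2m hx2
      have hb1 := hB11 (pr w2) ho2
      have hb2 := hB12 (pr w1) ho1
      exact real_chords h1lt h2lt hb1.1 hb1.2 hb2.1 hb2.2
        (fun h => hB21 h (pr w2) ho2) (fun h => hB22 h (pr w1) ho1)
        (htinj (pr w1) (pr w2) hm1P hm2P d4)
    · exact hchordspoke w1 w2 h1P h2P hc1 hc2 x hx1 hx2
    · exact hchordspoke w2 w1 h2P h1P hc2 hc1 x hx2 hx1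
    · apply d4
      rw [hpr_opp w1 hc1, hpr_opp w2 hc2]
  -- no two distinct edges cross
  have hcrossfree : ∀ u1 v1 u2 v2 : ↥S, G.Adj u1 v1 → G.Adj u2 v2 →
      SegCross ↑u1 ↑v1 ↑u2 ↑v2 → s(u1, v1) = s(u2, v2) := by
    intro u1 v1 u2 v2 ha1 ha2 hsc
    by_cases hE : s(u1, v1) = s(u2, v2)
    · exact hE
    exfalso
    obtain ⟨x, hx1, hx2⟩ := hsc
    have hne1 : u1 ≠ v1 := ha1.ne
    have hne2 : u2 ≠ v2 := ha2.ne
    by_cases e1 : u1 = u2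
    · have hvv : v1 ≠ v2 := by
        rintro rfl
        exact hE (by rw [e1])
      exact hshared u1 v1 v2 x hne1 (by rw [e1]; exact hne2) hvv hx1
        (by rw [e1]; exact hx2)
    by_cases e2 : u1 = v2
    · have hvv : v1 ≠ u2 := by
        rintro rfl
        exact hE (by rw [e2, Sym2.eq_swap])
      refine hshared u1 v1 u2 x hne1 e1 hvv hx1 ?_
      rw [openSegment_symm] at hx2
      rw [e2]
      exact hx2
    by_cases e3 : v1 = u2
    · have hvv : v1 ≠ v2 := fun h => hne2 (e3 ▸ h)
      refine hshared v1 u1 v2 x (Ne.symm hne1) hvv e2 ?_ ?_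
      · rw [openSegment_symm] at hx1
        exact hx1
      · rw [e3]
        exact hx2
    by_cases e4 : v1 = v2
    · refine hshared v1 u1 u2 x (Ne.symm hne1) e3 e1 ?_ ?_
      · rw [openSegment_symm] at hx1
        exact hx1
      · rw [openSegment_symm] at hx2
        rw [e4]
        exact hx2
    rcases hadj_cases u1 v1 ha1 with ⟨h1P, h1pr⟩ | ⟨h1P, h1pr⟩ <;>
      rcases hadj_cases u2 v2 ha2 with ⟨h2P, h2pr⟩ | ⟨h2P, h2pr⟩
    · exact hcore u1 u2 h1P h2P e1 (by rw [h2pr]; exact e2)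
        (by rw [h1pr]; exact e3) (by rw [h1pr, h2pr]; exact e4) x
        (by rw [h1pr]; exact hx1) (by rw [h2pr]; exact hx2)
    · exact hcore u1 v2 h1P h2P e2 (by rw [h2pr]; exact e1)
        (by rw [h1pr]; exact e4) (by rw [h1pr, h2pr]; exact e3) x
        (by rw [h1pr]; exact hx1)
        (by rw [h2pr, openSegment_symm]; exact hx2)
    · exact hcore v1 u2 h1P h2P e3 (by rw [h2pr]; exact e4)
        (by rw [h1pr]; exact e1) (by rw [h1pr, h2pr]; exact e2) x
        (by rw [h1pr, openSegment_symm]; exact hx1)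
        (by rw [h2pr]; exact hx2)
    · exact hcore v1 v2 h1P h2P e4 (by rw [h2pr]; exact e3)
        (by rw [h1pr]; exact e2) (by rw [h1pr, h2pr]; exact e1) x
        (by rw [h1pr, openSegment_symm]; exact hx1)
        (by rw [h2pr, openSegment_symm]; exact hx2)
  refine ⟨G, ⟨hconn, hacyc⟩, hproper, ?_⟩
  intro e1 he1 e2 he2 hne12 hEC
  obtain ⟨A, B, Cc, D, rfl, rfl, hsc⟩ := hEC
  exact hne12 (hcrossfree A B Cc D (G.mem_edgeSet.mp he1)
    (G.mem_edgeSet.mp he2) hsc)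
end
end
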